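/- Let A be a complete normed ring with unit 1, R : ℝ → A Bochner measurable, β : ℝ → ℝ integrable with ‖R(τ)‖ ≤ β(τ) a.e., and Q(t,0) the Dyson series with base point 0. Then for all 0 ≤ s ≤ t, ‖Q(t,0) − Q(s,0)‖ ≤ ∫_s^t β(t₁) · exp(∫_0^{t₁} β(τ) dτ) dt₁. -/

import Mathlib

open MeasureTheory intervalIntegral Filter Topology

/-- The `k`-fold time-ordered iterated Bochner integral
`∫_s^t R(t₁) (∫_s^{t₁} R(t₂) ( ⋯ (∫_s^{t_{k−1}} R(t_k) dt_k) ⋯ ) dt₂) dt₁`. -/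
noncomputable def timeOrderedIntegral {A : Type*} [NormedRing A] [NormedSpace ℝ A]
    (f : ℝ → A) (s : ℝ) : ℕ → ℝ → A
  | 0, _ => 1
  | k + 1, t => ∫ τ in s..t, f τ * timeOrderedIntegral f s k τ

/-- The Dyson series
`Q(t,s) = 1 + Σ_{k≥1} i^k ∫_s^t R(t₁) ∫_s^{t₁} R(t₂) ⋯ ∫_s^{t_{k−1}} R(t_k) dt_k ⋯ dt₁`. -/
noncomputable def dyson {A : Type*} [NormedRing A] [NormedAlgebra ℂ A]
    (R : ℝ → A) (s t : ℝ) : A :=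
  1 + ∑' k : ℕ, (Complex.I ^ (k + 1)) • timeOrderedIntegral R s (k + 1) t

set_option linter.unusedSectionVars false
set_option linter.unusedVariables false

namespace DysonProof

lemma pow_mul_sub_le (k : ℕ) {a b : ℝ} (ha : 0 ≤ a) (hab : a ≤ b) :
    a ^ k * (b - a) ≤ (b ^ (k + 1) - a ^ (k + 1)) / (k + 1) := by
  rw [le_div_iff₀ (by positivity : (0:ℝ) < (k:ℝ) + 1)]
  have h := geom_sum₂_mul b a (k + 1)
  have hterm : ∀ i ∈ Finset.range (k + 1), a ^ k ≤ b ^ i * a ^ (k + 1 - 1 - i) := by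
    intro i hi
    rw [Finset.mem_range] at hi
    have hsplit : a ^ k = a ^ i * a ^ (k + 1 - 1 - i) := by
      rw [← pow_add]; congr 1; omega
    rw [hsplit]
    exact mul_le_mul_of_nonneg_right (pow_le_pow_left₀ ha hab i) (pow_nonneg ha _)
  have hsum : ((k:ℝ) + 1) * a ^ k ≤ ∑ i ∈ Finset.range (k + 1), b ^ i * a ^ (k + 1 - 1 - i) := by
    calc ((k:ℝ) + 1) * a ^ k = ∑ _i ∈ Finset.range (k + 1), a ^ k := by
          rw [Finset.sum_const, Finset.card_range, nsmul_eq_mul]; push_cast; ring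
      _ ≤ _ := Finset.sum_le_sum hterm
  calc a ^ k * (b - a) * ((k:ℝ) + 1) = ((k:ℝ) + 1) * a ^ k * (b - a) := by ring
    _ ≤ (∑ i ∈ Finset.range (k + 1), b ^ i * a ^ (k + 1 - 1 - i)) * (b - a) :=
        mul_le_mul_of_nonneg_right hsum (sub_nonneg.2 hab)
    _ = b ^ (k + 1) - a ^ (k + 1) := h

lemma integral_mul_pow_le (β : ℝ → ℝ) (hβ : Integrable β (volume : Measure ℝ))
    (hβ0 : ∀ᵐ τ ∂(volume : Measure ℝ), 0 ≤ β τ) (k : ℕ) {u : ℝ} (hu : 0 ≤ u) :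
    ∫ τ in (0:ℝ)..u, β τ * (∫ σ in (0:ℝ)..τ, β σ) ^ k ≤
      (∫ σ in (0:ℝ)..u, β σ) ^ (k + 1) / ((k:ℝ) + 1) := by
  have hint : ∀ a b : ℝ, IntervalIntegrable β volume a b := fun a b => hβ.intervalIntegrable
  set B : ℝ → ℝ := fun y => ∫ σ in (0:ℝ)..y, β σ with hBdef
  have hBc : Continuous B := intervalIntegral.continuous_primitive hint 0
  have hBsub : ∀ a b : ℝ, B b - B a = ∫ σ in a..b, β σ := fun a b =>
    integral_interval_sub_left (hint 0 b) (hint 0 a)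
  have hBmono : Monotone B := by
    intro a b hab
    have h0 : 0 ≤ ∫ σ in a..b, β σ := intervalIntegral.integral_nonneg_of_ae hab hβ0
    have := hBsub a b
    linarith
  have hiiBk : ∀ (m : ℕ) (a b : ℝ), IntervalIntegrable (fun τ => β τ * B τ ^ m) volume a b :=
    fun m a b => (hint a b).mul_continuousOn ((hBc.pow m).continuousOn)
  have hB0 : B 0 = 0 := intervalIntegral.integral_same
  have hBu : 0 ≤ B u := hB0 ▸ hBmono hu
  have hBu1 : (0:ℝ) < B u + 1 := by linarith
  refine le_of_forall_pos_le_add fun ε hε => ?_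
  set ε' := ε / (B u + 1) with hε'def
  have hε' : 0 < ε' := div_pos hε hBu1
  have hucont : UniformContinuousOn (fun y => B y ^ k) (Set.Icc 0 u) :=
    isCompact_Icc.uniformContinuousOn_of_continuous ((hBc.pow k).continuousOn)
  obtain ⟨δ, hδ0, hδ⟩ := Metric.uniformContinuousOn_iff.1 hucont ε' hε'
  obtain ⟨n, hn⟩ := exists_nat_gt (u / δ)
  have hn0 : 0 < (n:ℝ) := lt_of_le_of_lt (div_nonneg hu hδ0.le) hn
  set x : ℕ → ℝ := fun i => (i : ℝ) * u / n with hxdef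
  have hx0 : x 0 = 0 := by simp [hxdef]
  have hxn : x n = u := by simp only [hxdef]; exact mul_div_cancel_left₀ u hn0.ne'
  have hxmono : ∀ i j : ℕ, i ≤ j → x i ≤ x j := by
    intro i j hij
    have hij' : (i:ℝ) ≤ j := by exact_mod_cast hij
    simp only [hxdef]
    gcongr
  have hgap : ∀ i : ℕ, x (i+1) - x i = u / n := by
    intro i; simp only [hxdef]; push_cast; ring
  have hsmall : u / n < δ := by
    rw [div_lt_iff₀ hn0]
    calc u = u / δ * δ := by field_simp
      _ < n * δ := by exact mul_lt_mul_of_pos_right hn hδ0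
      _ = δ * n := mul_comm _ _
  have hsplit : ∫ τ in (0:ℝ)..u, β τ * B τ ^ k
      = ∑ i ∈ Finset.range n, ∫ τ in x i..x (i+1), β τ * B τ ^ k := by
    rw [intervalIntegral.sum_integral_adjacent_intervals (fun i _ => hiiBk k _ _), hx0, hxn]
  rw [hsplit]
  have hpiece : ∀ i ∈ Finset.range n, (∫ τ in x i..x (i+1), β τ * B τ ^ k)
      ≤ (B (x (i+1)) ^ (k+1) - B (x i) ^ (k+1)) / ((k:ℝ)+1)
          + ε' * (B (x (i+1)) - B (x i)) := by
    intro i hi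
    have hin : i + 1 ≤ n := Finset.mem_range.1 hi
    have hxi0 : 0 ≤ x i := by positivity
    have hxi1 : x i ≤ x (i+1) := hxmono _ _ (Nat.le_succ i)
    have hxiu : x (i+1) ≤ u := hxn ▸ hxmono _ _ hin
    have hBi : 0 ≤ B (x i) := hB0 ▸ hBmono hxi0
    have hBi1 : B (x i) ≤ B (x (i+1)) := hBmono hxi1
    have h1 : (∫ τ in x i..x (i+1), β τ * B τ ^ k)
        ≤ ∫ τ in x i..x (i+1), β τ * B (x (i+1)) ^ k := by
      apply intervalIntegral.integral_mono_ae_restrict hxi1 (hiiBk k _ _) ((hint _ _).mul_const _)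
      filter_upwards [ae_restrict_of_ae hβ0, ae_restrict_mem measurableSet_Icc] with τ h0 hmem
      have hBτ : 0 ≤ B τ := hB0 ▸ hBmono (hxi0.trans hmem.1)
      exact mul_le_mul_of_nonneg_left (pow_le_pow_left₀ hBτ (hBmono hmem.2) k) h0
    have h2 : (∫ τ in x i..x (i+1), β τ * B (x (i+1)) ^ k)
        = (B (x (i+1)) - B (x i)) * B (x (i+1)) ^ k := by
      rw [intervalIntegral.integral_mul_const, hBsub]
    have h3 : B (x (i+1)) ^ k ≤ B (x i) ^ k + ε' := by
      have hd : dist (x (i+1)) (x i) < δ := by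
        rw [Real.dist_eq, hgap i, abs_of_nonneg (div_nonneg hu hn0.le)]
        exact hsmall
      have hδ' := hδ (x (i+1)) ⟨by positivity, hxiu⟩ (x i) ⟨hxi0, hxi1.trans hxiu⟩ hd
      rw [Real.dist_eq, abs_of_nonneg (sub_nonneg.2 (pow_le_pow_left₀ hBi hBi1 k))] at hδ'
      linarith
    calc (∫ τ in x i..x (i+1), β τ * B τ ^ k)
        ≤ (B (x (i+1)) - B (x i)) * B (x (i+1)) ^ k := h1.trans_eq h2
      _ ≤ (B (x (i+1)) - B (x i)) * (B (x i) ^ k + ε') :=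
          mul_le_mul_of_nonneg_left h3 (by linarith)
      _ = B (x i) ^ k * (B (x (i+1)) - B (x i)) + ε' * (B (x (i+1)) - B (x i)) := by ring
      _ ≤ (B (x (i+1)) ^ (k+1) - B (x i) ^ (k+1)) / ((k:ℝ)+1)
            + ε' * (B (x (i+1)) - B (x i)) := by
          have := pow_mul_sub_le k hBi hBi1
          linarith
  calc ∑ i ∈ Finset.range n, ∫ τ in x i..x (i+1), β τ * B τ ^ k
      ≤ ∑ i ∈ Finset.range n, ((B (x (i+1)) ^ (k+1) - B (x i) ^ (k+1)) / ((k:ℝ)+1)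
          + ε' * (B (x (i+1)) - B (x i))) := Finset.sum_le_sum hpiece
    _ = (B (x n) ^ (k+1) - B (x 0) ^ (k+1)) / ((k:ℝ)+1) + ε' * (B (x n) - B (x 0)) := by
        rw [Finset.sum_add_distrib, ← Finset.sum_div, ← Finset.mul_sum,
          Finset.sum_range_sub (fun i => B (x i) ^ (k+1)), Finset.sum_range_sub (fun i => B (x i))]
    _ ≤ B u ^ (k+1) / ((k:ℝ)+1) + ε := by
        rw [hx0, hxn, hB0]
        have hz : (0:ℝ) ^ (k+1) = 0 := zero_pow (Nat.succ_ne_zero k)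
        rw [hz, sub_zero, sub_zero]
        have hεB : ε' * B u ≤ ε := by
          rw [hε'def, div_mul_eq_mul_div, div_le_iff₀ hBu1]
          nlinarith
        linarith

end DysonProof


namespace DysonProof2

variable {A : Type*} [NormedRing A] [NormedAlgebra ℂ A] [CompleteSpace A]

lemma ii_mul_cont (R : ℝ → A) (β : ℝ → ℝ)
    (hR : AEStronglyMeasurable R (volume : Measure ℝ))
    (hβ : Integrable β (volume : Measure ℝ))
    (hRβ : ∀ᵐ τ ∂(volume : Measure ℝ), ‖R τ‖ ≤ β τ)
    {g : ℝ → A} (hg : Continuous g) (a b : ℝ) :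
    IntervalIntegrable (fun τ => R τ * g τ) volume a b := by
  have hβ0 : ∀ᵐ τ ∂(volume : Measure ℝ), 0 ≤ β τ :=
    hRβ.mono fun τ h => (norm_nonneg _).trans h
  obtain ⟨C, hC⟩ := (isCompact_uIcc (a := a) (b := b)).exists_bound_of_continuousOn
    hg.continuousOn
  rw [intervalIntegrable_iff]
  apply Integrable.mono' ((hβ.mul_const C).integrableOn)
    ((hR.mul hg.aestronglyMeasurable).restrict)
  filter_upwards [ae_restrict_of_ae hRβ, ae_restrict_of_ae hβ0,
    ae_restrict_mem measurableSet_uIoc] with τ h1 h0 hmem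
  calc ‖R τ * g τ‖ ≤ ‖R τ‖ * ‖g τ‖ := norm_mul_le _ _
    _ ≤ β τ * C := mul_le_mul h1 (hC τ (Set.uIoc_subset_uIcc hmem)) (norm_nonneg _) h0

lemma T_cont (R : ℝ → A) (β : ℝ → ℝ)
    (hR : AEStronglyMeasurable R (volume : Measure ℝ))
    (hβ : Integrable β (volume : Measure ℝ))
    (hRβ : ∀ᵐ τ ∂(volume : Measure ℝ), ‖R τ‖ ≤ β τ) (k : ℕ) :
    Continuous (timeOrderedIntegral R 0 k) := by
  induction k with
  | zero => exact continuous_const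
  | succ k ih =>
    have he : timeOrderedIntegral R 0 (k+1)
        = fun t => ∫ τ in (0:ℝ)..t, R τ * timeOrderedIntegral R 0 k τ := rfl
    rw [he]
    exact intervalIntegral.continuous_primitive
      (fun a b => ii_mul_cont R β hR hβ hRβ ih a b) 0

lemma T_bound (R : ℝ → A) (β : ℝ → ℝ)
    (hR : AEStronglyMeasurable R (volume : Measure ℝ))
    (hβ : Integrable β (volume : Measure ℝ))
    (hRβ : ∀ᵐ τ ∂(volume : Measure ℝ), ‖R τ‖ ≤ β τ) (k : ℕ) :
    ∀ u : ℝ, 0 ≤ u → ‖timeOrderedIntegral R 0 (k+1) u‖ ≤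
      (∫ σ in (0:ℝ)..u, β σ) ^ (k+1) / (Nat.factorial (k+1) : ℝ) := by
  have hβ0 : ∀ᵐ τ ∂(volume : Measure ℝ), 0 ≤ β τ :=
    hRβ.mono fun τ h => (norm_nonneg _).trans h
  have hint : ∀ a b : ℝ, IntervalIntegrable β volume a b := fun a b => hβ.intervalIntegrable
  set B : ℝ → ℝ := fun y => ∫ σ in (0:ℝ)..y, β σ with hBdef
  have hBc : Continuous B := intervalIntegral.continuous_primitive hint 0
  have hB0 : B 0 = 0 := intervalIntegral.integral_same
  have hBmono : Monotone B := by
    intro a b hab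
    have h0 : 0 ≤ ∫ σ in a..b, β σ := intervalIntegral.integral_nonneg_of_ae hab hβ0
    have := integral_interval_sub_left (hint 0 b) (hint 0 a)
    have h2 : B b - B a = ∫ σ in a..b, β σ := this
    linarith
  induction k with
  | zero =>
    intro u hu
    have he : timeOrderedIntegral R 0 1 u
        = ∫ τ in (0:ℝ)..u, R τ * timeOrderedIntegral R 0 0 τ := rfl
    have hb : ∀ᵐ τ ∂(volume.restrict (Set.uIoc (0:ℝ) u)),
        ‖R τ * timeOrderedIntegral R 0 0 τ‖ ≤ β τ := by
      filter_upwards [ae_restrict_of_ae hRβ] with τ h1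
      simpa [timeOrderedIntegral] using h1
    have := intervalIntegral.norm_integral_le_abs_of_norm_le hb (hint 0 u)
    rw [he]
    refine this.trans ?_
    rw [abs_of_nonneg (intervalIntegral.integral_nonneg_of_ae hu hβ0)]
    simp [Nat.factorial]
  | succ k ih =>
    intro u hu
    have he : timeOrderedIntegral R 0 (k+2) u
        = ∫ τ in (0:ℝ)..u, R τ * timeOrderedIntegral R 0 (k+1) τ := rfl
    have hgc : Continuous fun τ => B τ ^ (k+1) / (Nat.factorial (k+1) : ℝ) :=
      (hBc.pow (k+1)).div_const _
    have hgii : IntervalIntegrable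
        (fun τ => β τ * (B τ ^ (k+1) / (Nat.factorial (k+1) : ℝ))) volume 0 u :=
      (hint 0 u).mul_continuousOn hgc.continuousOn
    have hb : ∀ᵐ τ ∂(volume.restrict (Set.uIoc (0:ℝ) u)),
        ‖R τ * timeOrderedIntegral R 0 (k+1) τ‖
          ≤ β τ * (B τ ^ (k+1) / (Nat.factorial (k+1) : ℝ)) := by
      filter_upwards [ae_restrict_of_ae hRβ, ae_restrict_of_ae hβ0,
        ae_restrict_mem measurableSet_uIoc] with τ h1 h0 hmem
      have hτ0 : 0 ≤ τ := by
        rw [Set.uIoc_of_le hu] at hmem; exact hmem.1.le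
      calc ‖R τ * timeOrderedIntegral R 0 (k+1) τ‖
          ≤ ‖R τ‖ * ‖timeOrderedIntegral R 0 (k+1) τ‖ := norm_mul_le _ _
        _ ≤ β τ * (B τ ^ (k+1) / (Nat.factorial (k+1) : ℝ)) :=
            mul_le_mul h1 (ih τ hτ0) (norm_nonneg _) h0
    rw [he]
    refine (intervalIntegral.norm_integral_le_abs_of_norm_le hb hgii).trans ?_
    have hnn : 0 ≤ ∫ τ in (0:ℝ)..u, β τ * (B τ ^ (k+1) / (Nat.factorial (k+1) : ℝ)) := by
      apply intervalIntegral.integral_nonneg_of_ae_restrict hu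
      filter_upwards [ae_restrict_of_ae hβ0, ae_restrict_mem measurableSet_Icc] with τ h0 hmem
      have hBτ : 0 ≤ B τ := hB0 ▸ hBmono hmem.1
      positivity
    rw [abs_of_nonneg hnn]
    have hkey := DysonProof.integral_mul_pow_le β hβ hβ0 (k+1) hu
    have hrw : (∫ τ in (0:ℝ)..u, β τ * (B τ ^ (k+1) / (Nat.factorial (k+1) : ℝ)))
        = (∫ τ in (0:ℝ)..u, β τ * B τ ^ (k+1)) / (Nat.factorial (k+1) : ℝ) := by
      rw [← intervalIntegral.integral_div]
      congr 1; funext τ; ring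
    rw [hrw]
    rw [div_le_div_iff₀ (by positivity) (by positivity)]
    have hfac : (Nat.factorial (k+2) : ℝ) = ((k:ℝ)+2) * (Nat.factorial (k+1) : ℝ) := by
      rw [Nat.factorial_succ]; push_cast; ring
    calc (∫ τ in (0:ℝ)..u, β τ * B τ ^ (k+1)) * (Nat.factorial (k+2) : ℝ)
        = ((∫ τ in (0:ℝ)..u, β τ * B τ ^ (k+1))) * (((k:ℝ)+2) * (Nat.factorial (k+1) : ℝ)) := by
          rw [hfac]
      _ ≤ (B u ^ (k+2) / ((k:ℝ)+1+1)) * (((k:ℝ)+2) * (Nat.factorial (k+1) : ℝ)) := by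
          have h2 : (0:ℝ) < ((k:ℝ)+2) * (Nat.factorial (k+1) : ℝ) := by positivity
          apply mul_le_mul_of_nonneg_right _ h2.le
          convert hkey using 2
          · rfl
          push_cast; ring
      _ = B u ^ (k+2) * (Nat.factorial (k+1) : ℝ) := by field_simp; ring
end DysonProof2

theorem dyson_difference_norm_le
    {A : Type*} [NormedRing A] [NormedAlgebra ℂ A] [CompleteSpace A]
    (R : ℝ → A) (β : ℝ → ℝ)
    (hR : AEStronglyMeasurable R (volume : Measure ℝ))
    (hβ : Integrable β (volume : Measure ℝ))
    (hRβ : ∀ᵐ τ ∂(volume : Measure ℝ), ‖R τ‖ ≤ β τ)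
    (s t : ℝ) (hs : 0 ≤ s) (hst : s ≤ t) :
    ‖dyson R 0 t - dyson R 0 s‖ ≤
      ∫ t₁ in s..t, β t₁ * Real.exp (∫ τ in (0:ℝ)..t₁, β τ) := by
  have hβ0 : ∀ᵐ τ ∂(volume : Measure ℝ), 0 ≤ β τ :=
    hRβ.mono fun τ h => (norm_nonneg _).trans h
  have hint : ∀ a b : ℝ, IntervalIntegrable β volume a b := fun a b => hβ.intervalIntegrable
  set B : ℝ → ℝ := fun y => ∫ σ in (0:ℝ)..y, β σ with hBdef
  have hBc : Continuous B := intervalIntegral.continuous_primitive hint 0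
  have hB0 : B 0 = 0 := intervalIntegral.integral_same
  have hBmono : Monotone B := by
    intro a b hab
    have h0 : 0 ≤ ∫ σ in a..b, β σ := intervalIntegral.integral_nonneg_of_ae hab hβ0
    have h2 : B b - B a = ∫ σ in a..b, β σ :=
      integral_interval_sub_left (hint 0 b) (hint 0 a)
    linarith
  have ht0 : (0:ℝ) ≤ t := hs.trans hst
  -- interval integrability of R * T k
  have hii : ∀ (k : ℕ) (a b : ℝ),
      IntervalIntegrable (fun τ => R τ * timeOrderedIntegral R 0 k τ) volume a b :=
    fun k a b => DysonProof2.ii_mul_cont R β hR hβ hRβ (DysonProof2.T_cont R β hR hβ hRβ k) a b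
  -- the scalar majorant sequence
  set c : ℕ → ℝ := fun k => ∫ τ in s..t, β τ * (B τ ^ k / (Nat.factorial k : ℝ)) with hcdef
  have hckii : ∀ k : ℕ, IntervalIntegrable
      (fun τ => β τ * (B τ ^ k / (Nat.factorial k : ℝ))) volume s t :=
    fun k => (hint s t).mul_continuousOn ((hBc.pow k).div_const _).continuousOn
  have hcnn : ∀ k, 0 ≤ c k := by
    intro k
    apply intervalIntegral.integral_nonneg_of_ae_restrict hst
    filter_upwards [ae_restrict_of_ae hβ0, ae_restrict_mem measurableSet_Icc] with τ h0 hmem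
    have hBτ : 0 ≤ B τ := hB0 ▸ hBmono (hs.trans hmem.1)
    positivity
  -- pointwise product bound
  have hprod : ∀ k : ℕ, ∀ᵐ τ ∂(volume.restrict (Set.uIoc s t)),
      ‖R τ * timeOrderedIntegral R 0 k τ‖ ≤ β τ * (B τ ^ k / (Nat.factorial k : ℝ)) := by
    intro k
    filter_upwards [ae_restrict_of_ae hRβ, ae_restrict_of_ae hβ0,
      ae_restrict_mem measurableSet_uIoc] with τ h1 h0 hmem
    have hτ0 : 0 ≤ τ := by
      rw [Set.uIoc_of_le hst] at hmem; exact hs.trans hmem.1.le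
    cases k with
    | zero => simpa [timeOrderedIntegral, Nat.factorial] using h1
    | succ k =>
      calc ‖R τ * timeOrderedIntegral R 0 (k+1) τ‖
          ≤ ‖R τ‖ * ‖timeOrderedIntegral R 0 (k+1) τ‖ := norm_mul_le _ _
        _ ≤ β τ * (B τ ^ (k+1) / (Nat.factorial (k+1) : ℝ)) :=
            mul_le_mul h1 (DysonProof2.T_bound R β hR hβ hRβ k τ hτ0) (norm_nonneg _) h0
  -- bound for each difference term
  have hdiffk : ∀ k : ℕ,
      ‖timeOrderedIntegral R 0 (k+1) t - timeOrderedIntegral R 0 (k+1) s‖ ≤ c k := by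
    intro k
    have he : timeOrderedIntegral R 0 (k+1) t - timeOrderedIntegral R 0 (k+1) s
        = ∫ τ in s..t, R τ * timeOrderedIntegral R 0 k τ :=
      integral_interval_sub_left (hii k 0 t) (hii k 0 s)
    rw [he]
    refine (intervalIntegral.norm_integral_le_abs_of_norm_le (hprod k) (hckii k)).trans ?_
    rw [abs_of_nonneg (hcnn k)]
  -- the right-hand side and partial sum bound
  have hRHSii : IntervalIntegrable (fun τ => β τ * Real.exp (B τ)) volume s t :=
    (hint s t).mul_continuousOn (Real.continuous_exp.comp hBc).continuousOn
  have hpartial : ∀ n : ℕ, ∑ k ∈ Finset.range n, c k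
      ≤ ∫ τ in s..t, β τ * Real.exp (B τ) := by
    intro n
    simp only [hcdef]
    rw [← intervalIntegral.integral_finset_sum (fun k _ => hckii k)]
    have hsumii : IntervalIntegrable
        (fun x => ∑ k ∈ Finset.range n, β x * (B x ^ k / (Nat.factorial k : ℝ))) volume s t := by
      have := IntervalIntegrable.sum (μ := volume) (a := s) (b := t)
        (Finset.range n) (fun k _ => hckii k)
      have h2 : (∑ k ∈ Finset.range n, fun τ => β τ * (B τ ^ k / (Nat.factorial k : ℝ)))
          = fun x => ∑ k ∈ Finset.range n, β x * (B x ^ k / (Nat.factorial k : ℝ)) := by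
        funext x; simp
      rwa [h2] at this
    apply intervalIntegral.integral_mono_ae_restrict hst hsumii hRHSii
    filter_upwards [ae_restrict_of_ae hβ0, ae_restrict_mem measurableSet_Icc] with τ h0 hmem
    have hBτ : 0 ≤ B τ := hB0 ▸ hBmono (hs.trans hmem.1)
    calc ∑ k ∈ Finset.range n, β τ * (B τ ^ k / (Nat.factorial k : ℝ))
        = β τ * ∑ k ∈ Finset.range n, B τ ^ k / (Nat.factorial k : ℝ) := by
          rw [Finset.mul_sum]
      _ ≤ β τ * Real.exp (B τ) :=
          mul_le_mul_of_nonneg_left (Real.sum_le_exp_of_nonneg hBτ n) h0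
  have hcsum : Summable c := summable_of_sum_range_le hcnn hpartial
  have htsumc : ∑' k, c k ≤ ∫ τ in s..t, β τ * Real.exp (B τ) :=
    Real.tsum_le_of_sum_range_le hcnn hpartial
  -- summability of the Dyson series terms
  have hsummD : ∀ u : ℝ, 0 ≤ u →
      Summable (fun k : ℕ => (Complex.I ^ (k+1)) • timeOrderedIntegral R 0 (k+1) u) := by
    intro u hu
    apply Summable.of_norm_bounded (g := fun k => B u ^ (k+1) / (Nat.factorial (k+1) : ℝ))
      ((summable_nat_add_iff 1).mpr (Real.summable_pow_div_factorial (B u)))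
    intro k
    rw [norm_smul, norm_pow, Complex.norm_I, one_pow, one_mul]
    exact DysonProof2.T_bound R β hR hβ hRβ k u hu
  -- rewrite the difference
  have hDdiff : dyson R 0 t - dyson R 0 s
      = ∑' k : ℕ, ((Complex.I ^ (k+1)) • timeOrderedIntegral R 0 (k+1) t
          - (Complex.I ^ (k+1)) • timeOrderedIntegral R 0 (k+1) s) := by
    rw [dyson, dyson, add_sub_add_left_eq_sub, Summable.tsum_sub (hsummD t ht0) (hsummD s hs)]
  rw [hDdiff]
  refine (tsum_of_norm_bounded hcsum.hasSum fun k => ?_).trans htsumc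
  rw [← smul_sub, norm_smul, norm_pow, Complex.norm_I, one_pow, one_mul]
  exact hdiffk k
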